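/- For all integers n ≥ m ≥ 1, one has (m−1)!·f(m,n) = (−1)^{m+n+1}·(m−1)! + m!·(−1)^n · Σ_{k=m}^{n} (−1)^k · Surj(k−1, m−1), where Surj(a,b) denotes the number of surjective functions from a set with a elements onto a set with b elements. (Equivalently, f(m,n) = (−1)^{m+n+1} + m!·(−1)^n Σ_{k=m}^{n} (−1)^k S(k−1, m−1), with S the Stirling numbers of the second kind, since (m−1)!·S(k−1,m−1) = Surj(k−1,m−1).) -/

import Mathlib

open Finset in
open Classical in
/-- The (non-reduced) Euler characteristic of `Hom(K_m, K_n)`: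
`χ(m,n) = Σ_η (−1)^{(Σ_i |η(i)|) − m}`, where `η` ranges over all functions from
`{1,…,m}` to nonempty subsets of `{1,…,n}` with pairwise disjoint values. -/
noncomputable def homEulerChar (m n : ℕ) : ℤ :=
  ∑ η : Fin m → Finset (Fin n),
    if (∀ i, (η i).Nonempty) ∧ (∀ i j : Fin m, i ≠ j → Disjoint (η i) (η j))
    then (-1 : ℤ) ^ ((∑ i, (η i).card) - m) else 0

/-- `f(m,n) = (−1)^{n−m}·(χ(m,n) − 1)`, the number of spheres in the wedge
decomposition of `Hom(K_m, K_n)`. -/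
noncomputable def sphereCount (m n : ℕ) : ℤ :=
  (-1 : ℤ) ^ (n - m) * (homEulerChar m n - 1)

open Classical in
/-- `Surj a b` is the number of surjective functions from a set with `a` elements
onto a set with `b` elements. -/
noncomputable def Surj (a b : ℕ) : ℕ :=
  Fintype.card {g : Fin a → Fin b // Function.Surjective g}

open Finset

lemma neg_one_pow_sub' (m k : ℕ) (h : k ≤ m) : (-1:ℤ)^(m-k) * (-1:ℤ)^k = (-1:ℤ)^m := by
  rw [← pow_add, Nat.sub_add_cancel h]

lemma moebius {ι : Type*} [Fintype ι] [DecidableEq ι] (S : Finset ι) :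
    (∑ B : Finset ι, if S ⊆ B then (-1:ℤ)^(Fintype.card ι - B.card) else 0)
      = if S = Finset.univ then 1 else 0 := by
  have hinv : Function.Involutive (fun B : Finset ι => Bᶜ) := fun B => compl_compl B
  have hsum := Equiv.sum_comp (hinv.toPerm _)
      (fun B : Finset ι => if S ⊆ B then (-1:ℤ)^(Fintype.card ι - B.card) else 0)
  rw [← hsum]
  show (∑ B : Finset ι, if S ⊆ Bᶜ then (-1:ℤ)^(Fintype.card ι - Bᶜ.card) else 0) = _
  have h1 : ∀ B : Finset ι,
      (if S ⊆ Bᶜ then (-1:ℤ)^(Fintype.card ι - Bᶜ.card) else 0)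
        = if B ∈ Sᶜ.powerset then (-1:ℤ)^B.card else 0 := by
    intro B
    rw [Finset.card_compl, Nat.sub_sub_self (Finset.card_le_univ B)]
    exact if_congr (by rw [mem_powerset, ← Finset.subset_compl_comm]) rfl rfl
  rw [Finset.sum_congr rfl fun B _ => h1 B, Finset.sum_ite_mem, Finset.univ_inter,
    Finset.sum_powerset_neg_one_pow_card]
  simp [Finset.compl_eq_empty_iff]

open Classical in
lemma surj_cast (a b : ℕ) :
    (Surj a b : ℤ) = ∑ g : Fin a → Fin b, if Function.Surjective g then (1:ℤ) else 0 := by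
  rw [Finset.sum_boole, Surj, Fintype.card_subtype]

lemma count_into (a : ℕ) {β : Type*} [Fintype β] [DecidableEq β] (B : Finset β) :
    (∑ g : Fin a → β, if ∀ x, g x ∈ B then (1:ℤ) else 0) = (B.card : ℤ)^a := by
  have h1 : ∀ g : Fin a → β, (if ∀ x, g x ∈ B then (1:ℤ) else 0)
      = ∏ x : Fin a, (if g x ∈ B then (1:ℤ) else 0) := by
    intro g
    rw [Finset.prod_boole]
    simp
  rw [Finset.sum_congr rfl fun g _ => h1 g]
  have h2 := Finset.prod_univ_sum (fun _ : Fin a => (univ : Finset β))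
      (fun _ v => if v ∈ B then (1:ℤ) else 0)
  rw [Fintype.piFinset_univ] at h2
  rw [← h2]
  simp [Finset.sum_boole]

open Classical in
lemma surj_formula (a b : ℕ) :
    (Surj a b : ℤ) = ∑ j ∈ Finset.range (b+1), (-1:ℤ)^(b-j) * (b.choose j) * (j:ℤ)^a := by
  have step1 : (∑ B : Finset (Fin b), (-1:ℤ)^(b - B.card) * (B.card:ℤ)^a)
      = ∑ j ∈ Finset.range (b+1), (-1:ℤ)^(b-j) * (b.choose j) * (j:ℤ)^a := by
    rw [← Finset.powerset_univ,
      Finset.sum_powerset_apply_card (fun j => (-1:ℤ)^(b-j) * (j:ℤ)^a)]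
    simp only [Finset.card_univ, Fintype.card_fin, nsmul_eq_mul]
    exact Finset.sum_congr rfl fun j _ => by ring
  have step2 : ∀ B : Finset (Fin b), (-1:ℤ)^(b - B.card) * (B.card:ℤ)^a
      = ∑ g : Fin a → Fin b, if ∀ x, g x ∈ B then (-1:ℤ)^(b - B.card) else 0 := by
    intro B
    rw [← count_into a B, Finset.mul_sum]
    exact Finset.sum_congr rfl fun g _ => by split <;> simp
  calc (Surj a b : ℤ)
      = ∑ g : Fin a → Fin b, if Function.Surjective g then (1:ℤ) else 0 := surj_cast a b
    _ = ∑ g : Fin a → Fin b, ∑ B : Finset (Fin b),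
          if (Finset.univ.image g) ⊆ B then (-1:ℤ)^(Fintype.card (Fin b) - B.card) else 0 := by
        refine Finset.sum_congr rfl fun g _ => ?_
        rw [moebius]
        have hiff : Function.Surjective g ↔ (Finset.univ.image g = Finset.univ) := by
          simp [Finset.eq_univ_iff_forall, Function.Surjective]
        exact if_congr hiff rfl rfl
    _ = ∑ B : Finset (Fin b), ∑ g : Fin a → Fin b,
          if (Finset.univ.image g) ⊆ B then (-1:ℤ)^(Fintype.card (Fin b) - B.card) else 0 :=
        Finset.sum_comm
    _ = ∑ B : Finset (Fin b), (-1:ℤ)^(b - B.card) * (B.card:ℤ)^a := by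
        refine Finset.sum_congr rfl fun B _ => ?_
        rw [step2 B]
        refine Finset.sum_congr rfl fun g _ => ?_
        refine if_congr ?_ (by rw [Fintype.card_fin]) rfl
        simp [Finset.image_subset_iff]
    _ = _ := step1

lemma surj_self (m : ℕ) : Surj m m = m.factorial := by
  have e : {g : Fin m → Fin m // Function.Surjective g} ≃ Equiv.Perm (Fin m) :=
    { toFun := fun g => Equiv.ofBijective g.1
        ((Fintype.bijective_iff_surjective_and_card g.1).2 ⟨g.2, rfl⟩)
      invFun := fun p => ⟨p, p.surjective⟩
      left_inv := fun g => Subtype.ext rfl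
      right_inv := fun p => Equiv.ext fun x => rfl }
  rw [Surj, Fintype.card_congr e, Fintype.card_perm, Fintype.card_fin]

lemma surj_zero_of_lt {a b : ℕ} (h : a < b) : Surj a b = 0 := by
  rw [Surj, Fintype.card_eq_zero_iff]
  constructor
  intro g
  exact absurd (Fintype.card_le_of_surjective g.1 g.2) (by simp [Nat.not_le, h])

lemma hsign (s m : ℕ) (h : m ≤ s) : (-1:ℤ)^(s-m) = (-1:ℤ)^m * (-1:ℤ)^s := by
  have h2 : ((-1:ℤ)^m) * ((-1:ℤ)^m) = 1 := by
    rw [← pow_add]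
    exact Even.neg_one_pow ⟨m, rfl⟩
  calc (-1:ℤ)^(s-m) = (-1:ℤ)^(s-m) * (((-1:ℤ)^m) * ((-1:ℤ)^m)) := by rw [h2, mul_one]
    _ = (-1:ℤ)^m * ((-1:ℤ)^(s-m) * (-1:ℤ)^m) := by ring
    _ = (-1:ℤ)^m * (-1:ℤ)^s := by rw [neg_one_pow_sub' s m h]

lemma prod_indicator' {ι : Type*} [Fintype ι] (P : ι → Prop) [DecidablePred P] (w : ι → ℤ) :
    (if ∀ x, P x then ∏ x, w x else 0) = ∏ x, if P x then w x else 0 := by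
  by_cases h : ∀ x, P x
  · rw [if_pos h]
    exact Finset.prod_congr rfl fun x _ => (if_pos (h x)).symm
  · rw [if_neg h]
    push_neg at h
    obtain ⟨x0, hx0⟩ := h
    refine (Finset.prod_eq_zero (i := x0) (Finset.mem_univ x0) ?_).symm
    exact if_neg hx0

section core
variable {m n : ℕ}

/-- the map from `g`-encodings to disjoint families -/
def Phi (g : Fin n → Option (Fin m)) : Fin m → Finset (Fin n) :=
  fun i => univ.filter (fun x => g x = some i)

lemma Phi_disj (g : Fin n → Option (Fin m)) (i j : Fin m) (hij : i ≠ j) :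
    Disjoint (Phi g i) (Phi g j) := by
  rw [Finset.disjoint_left]
  intro x hxi hxj
  simp only [Phi, mem_filter, mem_univ, true_and] at hxi hxj
  rw [hxi] at hxj
  exact hij (Option.some_inj.1 hxj)

lemma Phi_inj : Function.Injective (Phi (m := m) (n := n)) := by
  intro g g' h
  funext x
  have key : ∀ i, (g x = some i ↔ g' x = some i) := by
    intro i
    have := congrFun h i
    constructor
    · intro hx
      have : x ∈ Phi g' i := by rw [← this]; simp [Phi, hx]
      simpa [Phi] using this
    · intro hx
      have : x ∈ Phi g i := by rw [this]; simp [Phi, hx]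
      simpa [Phi] using this
  cases hgx : g x with
  | some i => exact ((key i).1 hgx).symm
  | none =>
    cases hgx' : g' x with
    | some i => rw [(key i).2 hgx'] at hgx; exact absurd hgx (by simp)
    | none => rfl

lemma Phi_range (η : Fin m → Finset (Fin n))
    (hd : ∀ i j : Fin m, i ≠ j → Disjoint (η i) (η j)) : ∃ g, Phi g = η := by
  classical
  refine ⟨fun x => if h : ∃ i, x ∈ η i then some h.choose else none, ?_⟩
  funext i
  ext x
  simp only [Phi, mem_filter, mem_univ, true_and]
  constructor
  · intro hx
    split at hx
    · rename_i h
      rw [Option.some_inj] at hx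
      exact hx ▸ h.choose_spec
    · exact absurd hx (by simp)
  · intro hx
    have h : ∃ i, x ∈ η i := ⟨i, hx⟩
    rw [dif_pos h, Option.some_inj]
    by_contra hne
    exact (Finset.disjoint_left.1 (hd _ _ hne) h.choose_spec) hx

lemma Phi_card_sum (g : Fin n → Option (Fin m)) :
    (∑ i, (Phi g i).card) = ∑ x : Fin n, if g x = none then 0 else 1 := by
  classical
  have h1 : ∀ i, (Phi g i).card = ∑ x : Fin n, if g x = some i then 1 else 0 := by
    intro i
    rw [Phi, Finset.card_filter]
  rw [Finset.sum_congr rfl fun i _ => h1 i, Finset.sum_comm]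
  refine Finset.sum_congr rfl fun x _ => ?_
  cases hgx : g x with
  | none => simp [hgx]
  | some i0 => simp [hgx]

end core

open Classical in
lemma T_eval (m n : ℕ) (B : Finset (Fin m)) :
    (∑ η : Fin m → Finset (Fin n),
      if ((∀ i j : Fin m, i ≠ j → Disjoint (η i) (η j)) ∧ ∀ i, (η i).Nonempty → i ∈ B)
      then (-1:ℤ)^(∑ i, (η i).card) else 0) = (1 - (B.card:ℤ))^n := by
  classical
  set F : (Fin m → Finset (Fin n)) → ℤ := fun η =>
    if ((∀ i j : Fin m, i ≠ j → Disjoint (η i) (η j)) ∧ ∀ i, (η i).Nonempty → i ∈ B)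
    then (-1:ℤ)^(∑ i, (η i).card) else 0 with hF
  set c : Option (Fin m) → ℤ := fun v =>
    if (∀ i, v = some i → i ∈ B) then (if v = none then 1 else -1) else 0 with hc
  have stepa : (∑ η : Fin m → Finset (Fin n), F η) = ∑ η ∈ univ.image (Phi (m := m) (n := n)), F η := by
    refine (Finset.sum_subset (Finset.subset_univ _) ?_).symm
    intro η _ hη
    rw [hF]
    by_cases hcond : ((∀ i j : Fin m, i ≠ j → Disjoint (η i) (η j)) ∧ ∀ i, (η i).Nonempty → i ∈ B)
    · exfalso
      obtain ⟨g, hg⟩ := Phi_range η hcond.1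
      exact hη (Finset.mem_image.2 ⟨g, Finset.mem_univ g, hg⟩)
    · exact if_neg hcond
  have stepb : (∑ η ∈ univ.image (Phi (m := m) (n := n)), F η)
      = ∑ g : Fin n → Option (Fin m), F (Phi g) :=
    Finset.sum_image (fun x _ y _ h => Phi_inj h)
  have stepc : ∀ g : Fin n → Option (Fin m), F (Phi g) = ∏ x : Fin n, c (g x) := by
    intro g
    have hcondiff : ((∀ i j : Fin m, i ≠ j → Disjoint (Phi g i) (Phi g j)) ∧
        ∀ i, (Phi g i).Nonempty → i ∈ B) ↔ (∀ x : Fin n, ∀ i, g x = some i → i ∈ B) := by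
      constructor
      · rintro ⟨-, h2⟩ x i hgx
        exact h2 i ⟨x, by simp [Phi, hgx]⟩
      · intro h
        refine ⟨Phi_disj g, fun i hi => ?_⟩
        obtain ⟨x, hx⟩ := hi
        simp only [Phi, mem_filter, mem_univ, true_and] at hx
        exact h x i hx
    have hval : (-1:ℤ)^(∑ i, (Phi g i).card) = ∏ x : Fin n, (if g x = none then (1:ℤ) else -1) := by
      rw [Phi_card_sum, ← Finset.prod_pow_eq_pow_sum]
      refine Finset.prod_congr rfl fun x _ => ?_
      split <;> simp
    rw [hF]
    simp only []
    rw [if_congr hcondiff hval rfl]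
    by_cases h : ∀ x : Fin n, ∀ i, g x = some i → i ∈ B
    · rw [if_pos h]
      refine Finset.prod_congr rfl fun x _ => ?_
      rw [hc]
      simp only []
      rw [if_pos (h x)]
    · rw [if_neg h]
      push_neg at h
      obtain ⟨x0, i0, hgx, hi0⟩ := h
      refine (Finset.prod_eq_zero (i := x0) (Finset.mem_univ x0) ?_).symm
      rw [hc]
      simp only []
      rw [if_neg (by push_neg; exact ⟨i0, hgx, hi0⟩)]
  have stepd : (∑ g : Fin n → Option (Fin m), ∏ x : Fin n, c (g x))
      = (∑ v : Option (Fin m), c v)^n := by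
    have h2 := Finset.prod_univ_sum (fun _ : Fin n => (univ : Finset (Option (Fin m))))
      (fun _ v => c v)
    rw [Fintype.piFinset_univ] at h2
    rw [← h2, Finset.prod_const, card_univ, Fintype.card_fin]
  have hcsum : (∑ v : Option (Fin m), c v) = 1 - (B.card:ℤ) := by
    rw [Fintype.sum_option]
    have hnone : c none = 1 := by simp [hc]
    have hsome : ∀ j : Fin m, c (some j) = if j ∈ B then (-1:ℤ) else 0 := by
      intro j
      simp [hc]
    rw [hnone, Finset.sum_congr rfl fun j _ => hsome j, Finset.sum_ite_mem, Finset.univ_inter,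
      Finset.sum_const]
    simp
    ring
  calc (∑ η : Fin m → Finset (Fin n), F η)
      = ∑ g : Fin n → Option (Fin m), F (Phi g) := by rw [stepa, stepb]
    _ = ∑ g : Fin n → Option (Fin m), ∏ x : Fin n, c (g x) :=
        Finset.sum_congr rfl fun g _ => stepc g
    _ = (1 - (B.card:ℤ))^n := by rw [stepd, hcsum]

open Classical in
lemma homEulerChar_eq (m n : ℕ) :
    homEulerChar m n
      = (-1:ℤ)^m * ∑ B : Finset (Fin m), (-1:ℤ)^(m - B.card) * (1 - (B.card:ℤ))^n := by
  classical
  have step1 : homEulerChar m n = (-1:ℤ)^m * ∑ η : Fin m → Finset (Fin n),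
      (if (∀ i, (η i).Nonempty) ∧ (∀ i j : Fin m, i ≠ j → Disjoint (η i) (η j))
        then (-1:ℤ)^(∑ i, (η i).card) else 0) := by
    rw [homEulerChar, Finset.mul_sum]
    refine Finset.sum_congr rfl fun η _ => ?_
    by_cases hcond : (∀ i, (η i).Nonempty) ∧ (∀ i j : Fin m, i ≠ j → Disjoint (η i) (η j))
    · rw [if_pos hcond, if_pos hcond]
      have hms : m ≤ ∑ i, (η i).card := by
        calc m = ∑ _i : Fin m, 1 := by simp
          _ ≤ ∑ i, (η i).card := Finset.sum_le_sum fun i _ => Finset.card_pos.2 (hcond.1 i)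
      exact hsign _ m hms
    · rw [if_neg hcond, if_neg hcond, mul_zero]
  have step2 : ∀ η : Fin m → Finset (Fin n),
      (if (∀ i, (η i).Nonempty) ∧ (∀ i j : Fin m, i ≠ j → Disjoint (η i) (η j))
        then (-1:ℤ)^(∑ i, (η i).card) else 0)
      = ∑ B : Finset (Fin m),
          if ((∀ i j : Fin m, i ≠ j → Disjoint (η i) (η j)) ∧ ∀ i, (η i).Nonempty → i ∈ B)
          then (-1:ℤ)^(m - B.card) * (-1:ℤ)^(∑ i, (η i).card) else 0 := by
    intro η
    by_cases hd : ∀ i j : Fin m, i ≠ j → Disjoint (η i) (η j)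
    · have hmo := moebius (Finset.univ.filter fun i => (η i).Nonempty)
      rw [Fintype.card_fin] at hmo
      calc (if (∀ i, (η i).Nonempty) ∧ (∀ i j : Fin m, i ≠ j → Disjoint (η i) (η j))
              then (-1:ℤ)^(∑ i, (η i).card) else 0)
          = (if (Finset.univ.filter fun i => (η i).Nonempty) = Finset.univ then (1:ℤ) else 0)
              * (-1:ℤ)^(∑ i, (η i).card) := by
            by_cases hne : ∀ i, (η i).Nonempty
            · rw [if_pos ⟨hne, hd⟩, if_pos (Finset.filter_eq_self.2 fun i _ => hne i), one_mul]
            · rw [if_neg (fun h => hne h.1), if_neg, zero_mul]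
              intro h
              refine hne fun i => ?_
              have : i ∈ Finset.univ.filter fun i => (η i).Nonempty := by
                rw [h]; exact Finset.mem_univ i
              exact (Finset.mem_filter.1 this).2
        _ = (∑ B : Finset (Fin m),
              if (Finset.univ.filter fun i => (η i).Nonempty) ⊆ B then (-1:ℤ)^(m - B.card) else 0)
              * (-1:ℤ)^(∑ i, (η i).card) := by rw [hmo]
        _ = _ := by
            rw [Finset.sum_mul]
            refine Finset.sum_congr rfl fun B _ => ?_
            rw [ite_mul, zero_mul]
            refine if_congr ?_ rfl rfl
            constructor
            · intro h
              exact ⟨hd, fun i hi => h (Finset.mem_filter.2 ⟨Finset.mem_univ i, hi⟩)⟩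
            · intro h i hi
              exact h.2 i (Finset.mem_filter.1 hi).2
    · rw [if_neg (fun h => hd h.2)]
      symm
      refine Finset.sum_eq_zero fun B _ => ?_
      exact if_neg (fun h => hd h.1)
  rw [step1, Finset.sum_congr rfl fun η _ => step2 η, Finset.sum_comm]
  congr 1
  refine Finset.sum_congr rfl fun B _ => ?_
  rw [← T_eval m n B, Finset.mul_sum]
  refine Finset.sum_congr rfl fun η _ => ?_
  rw [mul_ite, mul_zero]

noncomputable def G (m n : ℕ) : ℤ :=
  ∑ j ∈ Finset.range (m+1), (-1:ℤ)^(m-j) * (m.choose j) * ((j:ℤ)-1)^n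

lemma neg_one_sq' (k : ℕ) : (-1:ℤ)^k * (-1:ℤ)^k = 1 := by
  rw [← pow_add]
  exact Even.neg_one_pow ⟨k, rfl⟩

lemma G_diag (m : ℕ) : G m m = (m.factorial : ℤ) := by
  have hexp : ∀ j : ℕ, ((j:ℤ) - 1)^m
      = ∑ t ∈ Finset.range (m+1), (j:ℤ)^t * (-1:ℤ)^(m-t) * (m.choose t) := by
    intro j
    rw [sub_eq_add_neg, add_pow]
  have h1 : G m m = ∑ t ∈ Finset.range (m+1), (-1:ℤ)^(m-t) * (m.choose t) *
      ∑ j ∈ Finset.range (m+1), (-1:ℤ)^(m-j) * (m.choose j) * (j:ℤ)^t := by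
    rw [G, Finset.sum_congr rfl fun j _ => by rw [hexp j, Finset.mul_sum], Finset.sum_comm]
    refine Finset.sum_congr rfl fun t _ => ?_
    rw [Finset.mul_sum]
    exact Finset.sum_congr rfl fun j _ => by ring
  rw [h1, Finset.sum_congr rfl fun t (_ : t ∈ Finset.range (m+1)) => by rw [← surj_formula t m],
    Finset.sum_range_succ]
  have hzero : ∀ t ∈ Finset.range m, (-1:ℤ)^(m-t) * (m.choose t) * (Surj t m : ℤ) = 0 := by
    intro t ht
    rw [surj_zero_of_lt (Finset.mem_range.1 ht)]
    simp
  rw [Finset.sum_eq_zero hzero, zero_add, Nat.sub_self, surj_self]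
  simp

lemma G_key (m n : ℕ) (hm : 1 ≤ m) (hn : 1 ≤ n) :
    G m (n+1) + G m n = (m:ℤ) * (Surj n (m-1) : ℤ) := by
  have h1 : G m (n+1) + G m n
      = ∑ j ∈ Finset.range (m+1), (-1:ℤ)^(m-j) * (m.choose j) * ((j:ℤ) * ((j:ℤ)-1)^n) := by
    rw [G, G, ← Finset.sum_add_distrib]
    refine Finset.sum_congr rfl fun j _ => ?_
    rw [pow_succ]
    ring
  rw [h1, Finset.sum_range_succ']
  have h0 : (-1:ℤ)^(m-0) * (m.choose 0) * ((0:ℤ) * ((0:ℤ)-1)^n) = 0 := by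
    push_cast
    ring
  rw [show ((0:ℕ):ℤ) = (0:ℤ) by norm_cast, h0, add_zero]
  have h2 : ∀ i ∈ Finset.range m,
      (-1:ℤ)^(m-(i+1)) * (m.choose (i+1)) * (((i+1:ℕ):ℤ) * (((i+1:ℕ):ℤ)-1)^n)
      = (m:ℤ) * ((-1:ℤ)^((m-1)-i) * ((m-1).choose i) * (i:ℤ)^n) := by
    intro i _
    push_cast
    have hc : (m.choose (i+1) : ℤ) * ((i:ℤ)+1) = (m:ℤ) * ((m-1).choose i : ℤ) := by
      have h := Nat.add_one_mul_choose_eq (m-1) i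
      have hms : (m-1) + 1 = m := by omega
      rw [hms] at h
      have h2 := congrArg (fun x : ℕ => (x:ℤ)) h
      push_cast at h2
      linarith [h2]
    have he : m - (i+1) = (m-1) - i := by omega
    rw [he]
    calc (-1:ℤ)^((m-1)-i) * (m.choose (i+1)) * (((i:ℤ)+1) * ((i:ℤ)+1-1)^n)
        = (-1:ℤ)^((m-1)-i) * ((m.choose (i+1) : ℤ) * ((i:ℤ)+1)) * ((i:ℤ))^n := by ring_nf
      _ = (m:ℤ) * ((-1:ℤ)^((m-1)-i) * ((m-1).choose i) * (i:ℤ)^n) := by rw [hc]; ring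
  rw [Finset.sum_congr rfl h2]  -- need casts aligned
  rw [← Finset.mul_sum, surj_formula n (m-1), show (m-1)+1 = m from by omega]

lemma lemC (m : ℕ) (hm : 1 ≤ m) : ∀ n, m ≤ n →
    ((m-1).factorial : ℤ) * G m n
      = (m.factorial : ℤ) * (-1:ℤ)^n *
          ∑ k ∈ Finset.Icc m n, (-1:ℤ)^k * (Surj (k-1) (m-1) : ℤ) := by
  refine Nat.le_induction ?_ ?_
  · rw [Finset.Icc_self, Finset.sum_singleton, G_diag m, surj_self (m-1)]
    linear_combination (-(m.factorial:ℤ) * ((m-1).factorial:ℤ)) * neg_one_sq' m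
  · intro n hn IH
    have hkey := G_key m n hm (le_trans hm hn)
    rw [Finset.sum_Icc_succ_top (by omega : m ≤ n+1)]
    have hfact : ((m-1).factorial : ℤ) * (m:ℤ) = (m.factorial : ℤ) := by
      have h := Nat.mul_factorial_pred (show m ≠ 0 by omega)
      push_cast [← h]
      ring
    have hG : G m (n+1) = (m:ℤ) * (Surj n (m-1):ℤ) - G m n := by linarith [hkey]
    rw [show (n+1) - 1 = n from rfl, hG]
    linear_combination (Surj n (m-1):ℤ) * hfact - IH
      - (m.factorial:ℤ) * (Surj n (m-1):ℤ) * neg_one_sq' n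

lemma chi_G (m n : ℕ) : homEulerChar m n = (-1:ℤ)^(m+n) * G m n := by
  rw [homEulerChar_eq m n]
  have h1 : (∑ B : Finset (Fin m), (-1:ℤ)^(m - B.card) * (1 - (B.card:ℤ))^n)
      = ∑ j ∈ Finset.range (m+1), (m.choose j) • ((-1:ℤ)^(m-j) * (1 - (j:ℤ))^n) := by
    rw [← Finset.powerset_univ,
      Finset.sum_powerset_apply_card (fun j => (-1:ℤ)^(m-j) * (1 - (j:ℤ))^n)]
    simp only [Finset.card_univ, Fintype.card_fin]
  rw [h1, G, Finset.mul_sum, Finset.mul_sum]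
  refine Finset.sum_congr rfl fun j _ => ?_
  have hneg : (1 - (j:ℤ))^n = (-1:ℤ)^n * ((j:ℤ)-1)^n := by
    rw [show (1 - (j:ℤ)) = -((j:ℤ)-1) from by ring, neg_pow]
  rw [hneg, nsmul_eq_mul, pow_add]
  ring

/-- for `n ≥ m ≥ 1`,
`(m−1)!·f(m,n) = (−1)^{m+n+1}·(m−1)! + m!·(−1)^n·Σ_{k=m}^{n} (−1)^k·Surj(k−1, m−1)`. -/
theorem sphereCount_stirling_formula (m n : ℕ) (hm : 1 ≤ m) (hmn : m ≤ n) :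
    ((m - 1).factorial : ℤ) * sphereCount m n =
      (-1 : ℤ) ^ (m + n + 1) * ((m - 1).factorial : ℤ) +
        (m.factorial : ℤ) * (-1 : ℤ) ^ n *
          ∑ k ∈ Finset.Icc m n, (-1 : ℤ) ^ k * (Surj (k - 1) (m - 1) : ℤ) := by
  have hC := lemC m hm n hmn
  have hsignEq : (-1:ℤ)^(n-m) * (-1:ℤ)^(m+n) = 1 := by
    rw [← pow_add, show (n-m) + (m+n) = n + n from by omega]
    exact Even.neg_one_pow ⟨n, rfl⟩
  have hsign2 : (-1:ℤ)^(n-m) = (-1:ℤ)^(m+n) := by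
    calc (-1:ℤ)^(n-m) = (-1:ℤ)^(n-m) * ((-1:ℤ)^(m+n) * (-1:ℤ)^(m+n)) := by
          rw [neg_one_sq' (m+n), mul_one]
      _ = ((-1:ℤ)^(n-m) * (-1:ℤ)^(m+n)) * (-1:ℤ)^(m+n) := by ring
      _ = (-1:ℤ)^(m+n) := by rw [hsignEq, one_mul]
  rw [sphereCount, chi_G, pow_succ]
  rw [mul_sub, hsign2]
  calc ((m-1).factorial : ℤ) * ((-1:ℤ)^(m+n) * ((-1:ℤ)^(m+n) * G m n) - (-1:ℤ)^(m+n) * 1)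
      = ((m-1).factorial : ℤ) * (((-1:ℤ)^(m+n) * (-1:ℤ)^(m+n)) * G m n)
        - (-1:ℤ)^(m+n) * ((m-1).factorial : ℤ) := by ring
    _ = ((m-1).factorial : ℤ) * G m n - (-1:ℤ)^(m+n) * ((m-1).factorial : ℤ) := by
        rw [neg_one_sq' (m+n), one_mul]
    _ = _ := by
        rw [hC]
        ring
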